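/- Let Y be an infinite-dimensional Banach space over 𝕂 (= ℝ or ℂ). Then there exists a bounded linear operator T : ℓ₁ → Y which does not quasi attain its norm, i.e., the norm closure of T(B_{ℓ₁}) contains no point of norm ‖T‖. -/

import Mathlib

lemma aux_exists_unit_ker {𝕜 Y : Type*} [RCLike 𝕜] [NormedAddCommGroup Y] [NormedSpace 𝕜 Y]
    (hY : ¬ FiniteDimensional 𝕜 Y) {ι : Type*} [Finite ι] (g : ι → (Y →L[𝕜] 𝕜)) :
    ∃ z : Y, ‖z‖ = 1 ∧ ∀ i, g i z = 0 := by
  classical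
  cases nonempty_fintype ι
  set G : Y →ₗ[𝕜] (ι → 𝕜) := LinearMap.pi (fun i => (g i : Y →ₗ[𝕜] 𝕜)) with hG
  have hker : LinearMap.ker G ≠ ⊥ := by
    intro h
    exact hY (FiniteDimensional.of_injective G (LinearMap.ker_eq_bot.mp h))
  obtain ⟨z₀, hz₀mem, hz₀⟩ := Submodule.exists_mem_ne_zero_of_ne_bot hker
  have hz₀norm : ‖z₀‖ ≠ 0 := norm_ne_zero_iff.mpr hz₀
  refine ⟨((‖z₀‖ : ℝ) : 𝕜)⁻¹ • z₀, ?_, ?_⟩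
  · rw [norm_smul, norm_inv, RCLike.norm_ofReal, abs_of_nonneg (norm_nonneg _)]
    field_simp
  · intro i
    have h0 : G z₀ = 0 := LinearMap.mem_ker.mp hz₀mem
    have : g i z₀ = 0 := congrFun h0 i
    rw [map_smul, this, smul_zero]

lemma aux_mazur {𝕜 Y : Type*} [RCLike 𝕜] [NormedAddCommGroup Y] [NormedSpace 𝕜 Y]
    (hY : ¬ FiniteDimensional 𝕜 Y) (E : Submodule 𝕜 Y) (hE : FiniteDimensional 𝕜 E)
    {δ : ℝ} (hδ : 0 < δ) :
    ∃ z : Y, ‖z‖ = 1 ∧ ∀ e ∈ E, ∀ t : 𝕜, (1 - δ) * ‖e‖ ≤ ‖e + t • z‖ := by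
  classical
  haveI := hE
  haveI : ProperSpace E := FiniteDimensional.proper_rclike 𝕜 E
  set K : Set Y := Subtype.val '' (Metric.sphere (0:E) 1) with hK
  have hKnorm : ∀ p ∈ K, ‖p‖ = 1 := by
    rintro p ⟨q, hq, rfl⟩
    simpa [Submodule.coe_norm] using mem_sphere_zero_iff_norm.mp hq
  have hKcomp : IsCompact K := (isCompact_sphere _ _).image continuous_subtype_val
  have hcover : K ⊆ ⋃ p ∈ K, Metric.ball p δ :=
    fun p hp => Set.mem_biUnion hp (Metric.mem_ball_self hδ)
  obtain ⟨b, hbK, hbfin, hbcover⟩ :=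
    hKcomp.elim_finite_subcover_image (fun p _ => Metric.isOpen_ball) hcover
  haveI : Finite b := hbfin
  have hf : ∀ p : b, ∃ g : Y →L[𝕜] 𝕜, ‖g‖ = 1 ∧ g (p : Y) = (‖(p : Y)‖ : 𝕜) := by
    intro p
    have hp1 : ‖(p : Y)‖ = 1 := hKnorm _ (hbK p.2)
    exact exists_dual_vector 𝕜 (p : Y) (by rw [← norm_ne_zero_iff, hp1]; norm_num)
  choose f hf1 hf2 using hf
  obtain ⟨z, hz1, hz2⟩ := aux_exists_unit_ker hY f
  refine ⟨z, hz1, ?_⟩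
  intro e he t
  rcases eq_or_ne e 0 with rfl | hene
  · simp
  rcases le_or_gt 1 δ with hδ1 | hδ1
  · have : (1 - δ) * ‖e‖ ≤ 0 := mul_nonpos_of_nonpos_of_nonneg (by linarith) (norm_nonneg _)
    exact this.trans (norm_nonneg _)
  have henorm : ‖e‖ ≠ 0 := norm_ne_zero_iff.mpr hene
  set c : 𝕜 := ((‖e‖⁻¹ : ℝ) : 𝕜) with hc
  set ehat : Y := c • e with hehat
  have hehatnorm : ‖ehat‖ = 1 := by
    rw [hehat, norm_smul, hc, RCLike.norm_ofReal, abs_of_nonneg (by positivity)]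
    field_simp
  have hehatK : ehat ∈ K := by
    refine ⟨⟨ehat, E.smul_mem c he⟩, ?_, rfl⟩
    rw [mem_sphere_zero_iff_norm]
    simpa [Submodule.coe_norm] using hehatnorm
  obtain ⟨p, hpb, hpball⟩ := Set.mem_iUnion₂.mp (hbcover hehatK)
  set i : b := ⟨p, hpb⟩ with hi
  have hdist : ‖ehat - p‖ < δ := by
    have := Metric.mem_ball.mp hpball
    rwa [dist_eq_norm] at this
  have hfp1 : f i (p : Y) = 1 := by
    rw [hf2 i]
    norm_cast
    exact hKnorm _ (hbK hpb)
  have hfe : f i ehat = f i (ehat - p) + 1 := by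
    rw [map_sub, hfp1]; ring
  have hlow : 1 - δ ≤ ‖f i ehat‖ := by
    rw [hfe]
    have h1 : ‖f i (ehat - p)‖ ≤ ‖ehat - p‖ := by
      simpa [hf1 i] using (f i).le_opNorm (ehat - p)
    have h3 : ‖(1:𝕜)‖ - ‖f i (ehat - p) + 1‖ ≤ ‖(1:𝕜) - (f i (ehat - p) + 1)‖ :=
      norm_sub_norm_le _ _
    have h4 : ‖(1:𝕜) - (f i (ehat - p) + 1)‖ = ‖f i (ehat - p)‖ := by
      rw [show (1:𝕜) - (f i (ehat - p) + 1) = -(f i (ehat - p)) by ring, norm_neg]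
    simp only [norm_one] at h3
    rw [h4] at h3
    linarith
  -- now the main estimate
  have key : ‖f i (e + t • z)‖ ≤ ‖e + t • z‖ := by
    simpa [hf1 i] using (f i).le_opNorm (e + t • z)
  have hfz : f i (e + t • z) = f i e := by
    rw [map_add, map_smul, hz2 i, smul_zero, add_zero]
  have hee : e = ((‖e‖ : ℝ) : 𝕜) • ehat := by
    rw [hehat, smul_smul, hc]
    norm_cast
    rw [mul_inv_cancel₀ henorm]
    simp
  have hfe2 : ‖f i e‖ = ‖e‖ * ‖f i ehat‖ := by
    conv_lhs => rw [hee]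
    rw [map_smul, norm_smul, RCLike.norm_ofReal, abs_of_nonneg (norm_nonneg _)]
  have : (1 - δ) * ‖e‖ ≤ ‖f i e‖ := by
    rw [hfe2]
    calc (1 - δ) * ‖e‖ ≤ ‖f i ehat‖ * ‖e‖ := by
          apply mul_le_mul_of_nonneg_right hlow (norm_nonneg _)
      _ = ‖e‖ * ‖f i ehat‖ := by ring
  rw [hfz] at key
  linarith

lemma aux_seq {𝕜 Y : Type*} [RCLike 𝕜] [NormedAddCommGroup Y] [NormedSpace 𝕜 Y]
    (hY : ¬ FiniteDimensional 𝕜 Y) :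
    ∃ z : ℕ → Y, (∀ n, ‖z n‖ = 1) ∧
      ∀ n, ∀ e ∈ Submodule.span 𝕜 (z '' Set.Iio n), ∀ t : 𝕜,
        (1 - (4:ℝ)⁻¹ ^ (n+1)) * ‖e‖ ≤ ‖e + t • z n‖ := by
  classical
  haveI : Inhabited Y := ⟨0⟩
  obtain ⟨pick, hpick⟩ : ∃ pick : Submodule 𝕜 Y → ℕ → Y,
      ∀ (E : Submodule 𝕜 Y) (n : ℕ), FiniteDimensional 𝕜 E → (‖pick E n‖ = 1 ∧
        ∀ e ∈ E, ∀ t : 𝕜, (1 - (4:ℝ)⁻¹ ^ (n+1)) * ‖e‖ ≤ ‖e + t • pick E n‖) := by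
    have hpos : ∀ n : ℕ, (0:ℝ) < (4:ℝ)⁻¹ ^ (n+1) := fun n => by positivity
    choose f hf using fun (E : Submodule 𝕜 Y) (n : ℕ) (h : FiniteDimensional 𝕜 E) =>
      aux_mazur hY E h (hpos n)
    refine ⟨fun E n => if h : FiniteDimensional 𝕜 E then f E n h else 0, fun E n h => ?_⟩
    simp only [dif_pos h]
    exact hf E n h
  let L : ℕ → List Y := fun n =>
    Nat.rec [] (fun m prev => pick (Submodule.span 𝕜 {y | y ∈ prev}) m :: prev) n
  have hL : ∀ n, L (n+1) = pick (Submodule.span 𝕜 {y | y ∈ L n}) n :: L n := fun n => rfl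
  set z : ℕ → Y := fun n => (L (n+1)).headI with hzdef
  have hzn : ∀ n, z n = pick (Submodule.span 𝕜 {y | y ∈ L n}) n := by
    intro n
    simp only [hzdef]
    rw [hL n]
    rfl
  have hset : ∀ n, {y | y ∈ L n} = z '' Set.Iio n := by
    intro n
    induction n with
    | zero =>
      have h0 : L 0 = [] := rfl
      rw [h0, show Set.Iio 0 = (∅ : Set ℕ) from by ext k; simp]
      simp
    | succ m ih =>
      ext y
      have hIio : Set.Iio (m+1) = insert m (Set.Iio m) := by
        ext k; simp [Nat.lt_succ_iff]
      rw [Set.mem_setOf_eq, hIio, Set.image_insert_eq, hL m]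
      constructor
      · intro hy
        rcases List.mem_cons.mp hy with h | h
        · left; rw [h, ← hzn m]
        · right
          have hmem : y ∈ {y | y ∈ L m} := h
          rw [ih] at hmem
          exact hmem
      · intro hy
        rcases hy with h | h
        · exact List.mem_cons.mpr (Or.inl (by rw [h, hzn m]))
        · refine List.mem_cons.mpr (Or.inr ?_)
          have hmem : y ∈ {y | y ∈ L m} := by rw [ih]; exact h
          exact hmem
  have hfin : ∀ n, FiniteDimensional 𝕜 (Submodule.span 𝕜 {y | y ∈ L n}) := fun n =>
    FiniteDimensional.span_of_finite 𝕜 (L n).finite_toSet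
  refine ⟨z, ?_, ?_⟩
  · intro n
    rw [hzn n]
    exact (hpick _ n (hfin n)).1
  · intro n e he t
    rw [← hset n] at he
    have := (hpick _ n (hfin n)).2 e he t
    rwa [← hzn n] at this

lemma aux_geo : ∀ k N : ℕ, ∑ j ∈ Finset.Ico N (N+k), (4:ℝ)⁻¹^(j+1) ≤ (1/3) * (4:ℝ)⁻¹^N := by
  intro k
  induction k with
  | zero =>
    intro N
    rw [Nat.add_zero, Finset.Ico_self, Finset.sum_empty]
    positivity
  | succ k ih =>
    intro N
    have hlt : N < N + (k+1) := by omega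
    rw [Finset.sum_eq_sum_Ico_succ_bot hlt]
    have : N + (k+1) = (N+1) + k := by omega
    rw [this]
    have h2 := ih (N+1)
    have h3 : (4:ℝ)⁻¹^(N+1) = (4:ℝ)⁻¹^N * 4⁻¹ := by ring
    nlinarith [pow_nonneg (by norm_num : (0:ℝ) ≤ 4⁻¹) N]

lemma aux_proj1 {𝕜 Y : Type*} [RCLike 𝕜] [NormedAddCommGroup Y] [NormedSpace 𝕜 Y]
    (z : ℕ → Y)
    (hz : ∀ n, ∀ e ∈ Submodule.span 𝕜 (z '' Set.Iio n), ∀ t : 𝕜,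
        (1 - (4:ℝ)⁻¹ ^ (n+1)) * ‖e‖ ≤ ‖e + t • z n‖) :
    ∀ k N : ℕ, ∀ h ∈ Submodule.span 𝕜 (z '' Set.Iio N),
      ∀ w ∈ Submodule.span 𝕜 (z '' Set.Ico N (N+k)),
        (1 - ∑ j ∈ Finset.Ico N (N+k), (4:ℝ)⁻¹^(j+1)) * ‖h‖ ≤ ‖h + w‖ := by
  intro k
  induction k with
  | zero =>
    intro N h hh w hw
    have : Set.Ico N (N+0) = (∅ : Set ℕ) := by simp
    rw [this, Set.image_empty, Submodule.span_empty, Submodule.mem_bot] at hw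
    subst hw
    simp
  | succ k ih =>
    intro N h hh w hw
    have hins : Set.Ico N (N+(k+1)) = insert (N+k) (Set.Ico N (N+k)) := by
      ext j; simp [Set.mem_Ico]; omega
    rw [hins, Set.image_insert_eq] at hw
    obtain ⟨a, w', hw', rfl⟩ := Submodule.mem_span_insert.mp hw
    have hs1 : Set.Iio N ⊆ Set.Iio (N+k) := by
      intro j hj
      simp only [Set.mem_Iio] at *
      omega
    have hs2 : Set.Ico N (N+k) ⊆ Set.Iio (N+k) := by
      intro j hj
      simp only [Set.mem_Ico, Set.mem_Iio] at *
      omega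
    have hmem : h + w' ∈ Submodule.span 𝕜 (z '' Set.Iio (N+k)) := by
      apply Submodule.add_mem
      · exact Submodule.span_mono (Set.image_mono (f := z) hs1) hh
      · exact Submodule.span_mono (Set.image_mono (f := z) hs2) hw'
    have hstep := hz (N+k) (h + w') hmem a
    have hih := ih N h hh w' hw'
    have hsum : ∑ j ∈ Finset.Ico N (N+(k+1)), (4:ℝ)⁻¹^(j+1)
        = (∑ j ∈ Finset.Ico N (N+k), (4:ℝ)⁻¹^(j+1)) + (4:ℝ)⁻¹^(N+k+1) := by
      have : N + (k+1) = (N+k) + 1 := by omega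
      rw [this, Finset.sum_Ico_succ_top (by omega)]
    have heq : h + (a • z (N+k) + w') = (h + w') + a • z (N+k) := by abel
    rw [heq, hsum]
    have hS := aux_geo k N
    have hSnn : (0:ℝ) ≤ ∑ j ∈ Finset.Ico N (N+k), (4:ℝ)⁻¹^(j+1) :=
      Finset.sum_nonneg (fun j _ => by positivity)
    have hδnn : (0:ℝ) ≤ (4:ℝ)⁻¹^(N+k+1) := by positivity
    have hδle : (4:ℝ)⁻¹^(N+k+1) ≤ 1 := by
      apply pow_le_one₀ <;> norm_num
    have hpow : (4:ℝ)⁻¹^N ≤ 1 := by apply pow_le_one₀ <;> norm_num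
    have hmul := mul_le_mul_of_nonneg_left hih (sub_nonneg.mpr hδle)
    nlinarith [norm_nonneg h, norm_nonneg (h + w'),
      mul_nonneg (mul_nonneg hδnn hSnn) (norm_nonneg h)]

lemma aux_proj {𝕜 Y : Type*} [RCLike 𝕜] [NormedAddCommGroup Y] [NormedSpace 𝕜 Y]
    (z : ℕ → Y)
    (hz : ∀ n, ∀ e ∈ Submodule.span 𝕜 (z '' Set.Iio n), ∀ t : 𝕜,
        (1 - (4:ℝ)⁻¹ ^ (n+1)) * ‖e‖ ≤ ‖e + t • z n‖) :
    ∀ N : ℕ, ∀ h ∈ Submodule.span 𝕜 (z '' Set.Iio N),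
      ∀ w ∈ closure ((Submodule.span 𝕜 (z '' {j | N ≤ j}) : Submodule 𝕜 Y) : Set Y),
        (2/3 : ℝ) * ‖h‖ ≤ ‖h + w‖ := by
  intro N h hh w hw
  have hspan : ∀ w' ∈ Submodule.span 𝕜 (z '' {j | N ≤ j}), (2/3 : ℝ) * ‖h‖ ≤ ‖h + w'‖ := by
    intro w' hw'
    obtain ⟨t, hts, hwt⟩ := Submodule.mem_span_finite_of_mem_span hw'
    classical
    have hex : ∀ y ∈ t, ∃ j, N ≤ j ∧ z j = y := by
      intro y hy
      have := hts hy
      obtain ⟨j, hj, rfl⟩ := this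
      exact ⟨j, hj, rfl⟩
    choose! F hF1 hF2 using hex
    set M : ℕ := t.sup F + 1 with hM
    have hsub : (t : Set Y) ⊆ z '' Set.Ico N (N + M) := by
      intro y hy
      refine ⟨F y, ?_, hF2 y hy⟩
      have h1 := hF1 y hy
      have h2 : F y ≤ t.sup F := Finset.le_sup hy
      simp only [Set.mem_Ico]
      omega
    have hwt2 : w' ∈ Submodule.span 𝕜 (z '' Set.Ico N (N + M)) :=
      Submodule.span_mono hsub hwt
    have := aux_proj1 z hz M N h hh w' hwt2
    have hS := aux_geo M N
    have hpow : (4:ℝ)⁻¹^N ≤ 1 := by apply pow_le_one₀ <;> norm_num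
    nlinarith [norm_nonneg h]
  have hclosed : IsClosed {w : Y | (2/3 : ℝ) * ‖h‖ ≤ ‖h + w‖} :=
    isClosed_le continuous_const ((continuous_const.add continuous_id).norm)
  exact closure_minimal hspan hclosed hw

lemma aux_lp_norm {𝕜 : Type*} [RCLike 𝕜] (x : lp (fun _ : ℕ => 𝕜) 1) :
    ‖x‖ = ∑' n, ‖x n‖ := by
  have := lp.norm_rpow_eq_tsum (p := 1) (by norm_num) x
  simpa using this

lemma aux_lp_summable {𝕜 : Type*} [RCLike 𝕜] (x : lp (fun _ : ℕ => 𝕜) 1) :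
    Summable (fun n => ‖x n‖) := by
  have := (lp.memℓp x).summable (p := 1) (by norm_num)
  simpa using this

lemma aux_op {𝕜 Y : Type*} [RCLike 𝕜] [NormedAddCommGroup Y] [NormedSpace 𝕜 Y]
    [CompleteSpace Y] (v : ℕ → Y) (hv : ∀ n, ‖v n‖ ≤ 1) :
    ∃ T : lp (fun _ : ℕ => 𝕜) 1 →L[𝕜] Y,
      (∀ x, T x = ∑' n, x n • v n) ∧ ‖T‖ ≤ 1 := by
  have hsn : ∀ x : lp (fun _ : ℕ => 𝕜) 1, Summable (fun n => ‖x n • v n‖) := by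
    intro x
    apply Summable.of_nonneg_of_le (fun n => norm_nonneg _) _ (aux_lp_summable x)
    intro n
    rw [norm_smul]
    calc ‖x n‖ * ‖v n‖ ≤ ‖x n‖ * 1 := by
          exact mul_le_mul_of_nonneg_left (hv n) (norm_nonneg _)
      _ = ‖x n‖ := mul_one _
  have hs : ∀ x : lp (fun _ : ℕ => 𝕜) 1, Summable (fun n => x n • v n) :=
    fun x => (hsn x).of_norm
  set F : lp (fun _ : ℕ => 𝕜) 1 →ₗ[𝕜] Y :=
    { toFun := fun x => ∑' n, x n • v n
      map_add' := by
        intro x y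
        have hx := hs x
        have hy := hs y
        rw [← Summable.tsum_add hx hy]
        apply tsum_congr
        intro n
        rw [lp.coeFn_add, Pi.add_apply, add_smul]
      map_smul' := by
        intro c x
        simp only [RingHom.id_apply]
        rw [← Summable.tsum_const_smul c (hs x)]
        apply tsum_congr
        intro n
        rw [lp.coeFn_smul, Pi.smul_apply, smul_eq_mul, mul_smul]
        } with hF
  have hbound : ∀ x, ‖F x‖ ≤ 1 * ‖x‖ := by
    intro x
    rw [one_mul, aux_lp_norm x]
    calc ‖F x‖ ≤ ∑' n, ‖x n • v n‖ := norm_tsum_le_tsum_norm (hsn x)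
      _ ≤ ∑' n, ‖x n‖ := by
          apply Summable.tsum_le_tsum _ (hsn x) (aux_lp_summable x)
          intro n
          rw [norm_smul]
          calc ‖x n‖ * ‖v n‖ ≤ ‖x n‖ * 1 :=
                mul_le_mul_of_nonneg_left (hv n) (norm_nonneg _)
            _ = ‖x n‖ := mul_one _
  refine ⟨F.mkContinuous 1 hbound, fun x => rfl, ?_⟩
  exact F.mkContinuous_norm_le zero_le_one hbound

lemma aux_shift_summable {𝕜 : Type*} [RCLike 𝕜] (x : lp (fun _ : ℕ => 𝕜) 1) (N : ℕ) :
    Summable (fun i => ‖x (i + N)‖) :=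
  (summable_nat_add_iff N).mpr (aux_lp_summable x)

lemma aux_tail_norm_summable {𝕜 Y : Type*} [RCLike 𝕜] [NormedAddCommGroup Y] [NormedSpace 𝕜 Y]
    (v : ℕ → Y) (hv : ∀ n, ‖v n‖ ≤ 1) (x : lp (fun _ : ℕ => 𝕜) 1) (N : ℕ) :
    Summable (fun i => ‖x (i + N) • v (i + N)‖) := by
  apply Summable.of_nonneg_of_le (fun i => norm_nonneg _) _ (aux_shift_summable x N)
  intro i
  rw [norm_smul]
  calc ‖x (i+N)‖ * ‖v (i+N)‖ ≤ ‖x (i+N)‖ * 1 :=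
        mul_le_mul_of_nonneg_left (hv _) (norm_nonneg _)
    _ = ‖x (i+N)‖ := mul_one _

lemma aux_tail_summable {𝕜 Y : Type*} [RCLike 𝕜] [NormedAddCommGroup Y] [NormedSpace 𝕜 Y]
    [CompleteSpace Y]
    (v : ℕ → Y) (hv : ∀ n, ‖v n‖ ≤ 1) (x : lp (fun _ : ℕ => 𝕜) 1) (N : ℕ) :
    Summable (fun i => x (i + N) • v (i + N)) :=
  (aux_tail_norm_summable v hv x N).of_norm

lemma aux_tail_bound {𝕜 Y : Type*} [RCLike 𝕜] [NormedAddCommGroup Y] [NormedSpace 𝕜 Y]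
    [CompleteSpace Y]
    (v : ℕ → Y) (hv : ∀ n, ‖v n‖ ≤ 1) (x : lp (fun _ : ℕ => 𝕜) 1) (N : ℕ) :
    ‖∑' i, x (i + N) • v (i + N)‖ ≤ ∑' i, ‖x (i + N)‖ := by
  calc ‖∑' i, x (i + N) • v (i + N)‖ ≤ ∑' i, ‖x (i + N) • v (i + N)‖ :=
        norm_tsum_le_tsum_norm (aux_tail_norm_summable v hv x N)
    _ ≤ ∑' i, ‖x (i + N)‖ := by
        apply Summable.tsum_le_tsum _ (aux_tail_norm_summable v hv x N) (aux_shift_summable x N)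
        intro i
        rw [norm_smul]
        calc ‖x (i+N)‖ * ‖v (i+N)‖ ≤ ‖x (i+N)‖ * 1 :=
              mul_le_mul_of_nonneg_left (hv _) (norm_nonneg _)
          _ = ‖x (i+N)‖ := mul_one _

lemma aux_norm_summable {𝕜 Y : Type*} [RCLike 𝕜] [NormedAddCommGroup Y] [NormedSpace 𝕜 Y]
    (v : ℕ → Y) (hv : ∀ n, ‖v n‖ ≤ 1) (x : lp (fun _ : ℕ => 𝕜) 1) :
    Summable (fun n => ‖x n • v n‖) := by
  apply Summable.of_nonneg_of_le (fun n => norm_nonneg _) _ (aux_lp_summable x)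
  intro n
  rw [norm_smul]
  calc ‖x n‖ * ‖v n‖ ≤ ‖x n‖ * 1 := mul_le_mul_of_nonneg_left (hv _) (norm_nonneg _)
    _ = ‖x n‖ := mul_one _

set_option maxHeartbeats 1600000 in
/-- for every infinite-dimensional Banach space `Y` there exists a bounded linear
operator `T : ℓ₁ → Y` which does not quasi attain its norm. -/
theorem exists_operator_from_l1_not_quasi_attaining {𝕜 Y : Type*} [RCLike 𝕜]
    [NormedAddCommGroup Y] [NormedSpace 𝕜 Y] [CompleteSpace Y]
    (hY : ¬ FiniteDimensional 𝕜 Y) :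
    ∃ T : lp (fun _ : ℕ => 𝕜) 1 →L[𝕜] Y,
      ¬ ∃ u ∈ closure (⇑T '' Metric.closedBall 0 1), ‖u‖ = ‖T‖ := by
  classical
  obtain ⟨z, hz1, hz2⟩ := aux_seq hY
  set c : ℕ → ℝ := fun n => 1 - (2:ℝ)⁻¹ ^ (n+1) with hc
  have hcpos : ∀ n, 0 < c n := by
    intro n
    have : (2:ℝ)⁻¹ ^ (n+1) < 1 := by
      apply pow_lt_one₀ <;> norm_num
    simp only [hc]; linarith
  have hclt : ∀ n, c n < 1 := by
    intro n
    have : (0:ℝ) < (2:ℝ)⁻¹ ^ (n+1) := by positivity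
    simp only [hc]; linarith
  set v : ℕ → Y := fun n => ((c n : ℝ) : 𝕜) • z n with hv
  have hvnorm : ∀ n, ‖v n‖ = c n := by
    intro n
    rw [hv]
    rw [norm_smul, RCLike.norm_ofReal, abs_of_pos (hcpos n), hz1 n, mul_one]
  have hvle : ∀ n, ‖v n‖ ≤ 1 := fun n => by rw [hvnorm n]; exact (hclt n).le
  obtain ⟨T, hT, hTle⟩ := aux_op (𝕜 := 𝕜) v hvle
  -- summability facts
  have hsn : ∀ x : lp (fun _ : ℕ => 𝕜) 1, Summable (fun n => ‖x n • v n‖) :=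
    fun x => aux_norm_summable v hvle x
  have hs : ∀ x : lp (fun _ : ℕ => 𝕜) 1, Summable (fun n => x n • v n) :=
    fun x => (hsn x).of_norm
  -- norm of T is 1
  have hTge : ∀ n, c n ≤ ‖T‖ := by
    intro n
    have hsingle : T (lp.single 1 n (1:𝕜)) = v n := by
      rw [hT]
      rw [tsum_eq_single n]
      · rw [lp.single_apply_self, one_smul]
      · intro m hm
        rw [lp.single_apply_ne (E := fun _ : ℕ => 𝕜) 1 n (1:𝕜) hm, zero_smul]
    have hnorm1 : ‖(lp.single 1 n (1:𝕜) : lp (fun _ : ℕ => 𝕜) 1)‖ = 1 := by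
      have := lp.norm_single (p := 1) (E := fun _ : ℕ => 𝕜) (by norm_num) n (1:𝕜)
      simpa using this
    have := T.le_opNorm (lp.single 1 n (1:𝕜))
    rw [hsingle, hnorm1, mul_one, hvnorm n] at this
    exact this
  have hTnorm : ‖T‖ = 1 := by
    refine le_antisymm hTle ?_
    by_contra hlt
    push_neg at hlt
    obtain ⟨n, hn⟩ := exists_pow_lt_of_lt_one (by linarith : (0:ℝ) < 1 - ‖T‖)
      (by norm_num : (2:ℝ)⁻¹ < 1)
    have h1 : (2:ℝ)⁻¹ ^ (n+1) ≤ (2:ℝ)⁻¹ ^ n :=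
      pow_le_pow_of_le_one (by norm_num) (by norm_num) (by omega)
    have := hTge n
    simp only [hc] at this
    linarith
  refine ⟨T, ?_⟩
  rintro ⟨u, hucl, hunorm⟩
  rw [hTnorm] at hunorm
  -- approximation from closure
  have hap : ∀ ε : ℝ, 0 < ε → ∃ x : lp (fun _ : ℕ => 𝕜) 1, ‖x‖ ≤ 1 ∧ ‖u - T x‖ < ε := by
    intro ε hε
    obtain ⟨y, hy, hdy⟩ := Metric.mem_closure_iff.mp hucl ε hε
    obtain ⟨x, hx, rfl⟩ := hy
    refine ⟨x, ?_, ?_⟩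
    · exact mem_closedBall_zero_iff.mp hx
    · rwa [dist_eq_norm] at hdy
  obtain ⟨a, ha1, ha2⟩ := hap (1/10) (by norm_num)
  -- choose N with small tail for a
  have htail : Filter.Tendsto (fun N => ∑' i, ‖a (i + N)‖) Filter.atTop (nhds 0) :=
    tendsto_sum_nat_add (f := fun n => ‖a n‖)
  obtain ⟨N, hN⟩ := (htail.eventually_lt_const (by norm_num : (0:ℝ) < 1/10)).exists
  -- decomposition of T x at N
  have hdecomp : ∀ x : lp (fun _ : ℕ => 𝕜) 1,
      T x = (∑ j ∈ Finset.range N, x j • v j) + ∑' i, x (i + N) • v (i + N) := by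
    intro x
    rw [hT, ← Summable.sum_add_tsum_nat_add N (hs x)]
  -- spans
  set Shead : Submodule 𝕜 Y := Submodule.span 𝕜 (z '' Set.Iio N) with hShead
  set Stail : Submodule 𝕜 Y := Submodule.span 𝕜 (z '' {j | N ≤ j}) with hStail
  have hterm_head : ∀ (x : lp (fun _ : ℕ => 𝕜) 1), (∑ j ∈ Finset.range N, x j • v j) ∈ Shead := by
    intro x
    apply Submodule.sum_mem
    intro j hj
    rw [hv]
    rw [smul_smul]
    apply Submodule.smul_mem
    apply Submodule.subset_span
    exact ⟨j, by simpa using Finset.mem_range.mp hj, rfl⟩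
  have htail_sum : ∀ (x : lp (fun _ : ℕ => 𝕜) 1),
      Summable (fun i => x (i + N) • v (i + N)) := fun x => aux_tail_summable v hvle x N
  have hterm_tail : ∀ (x : lp (fun _ : ℕ => 𝕜) 1),
      (∑' i, x (i + N) • v (i + N)) ∈ closure (Stail : Set Y) := by
    intro x
    have hsum := (htail_sum x).hasSum
    apply mem_closure_of_tendsto hsum
    apply Filter.Eventually.of_forall
    intro s
    apply Submodule.sum_mem
    intro i _
    rw [hv, smul_smul]
    apply Submodule.smul_mem
    apply Submodule.subset_span
    exact ⟨i + N, by simp, rfl⟩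
  -- first approximant pieces
  set h₁ : Y := ∑ j ∈ Finset.range N, a j • v j with hh₁def
  set w₁ : Y := ∑' i, a (i + N) • v (i + N) with hw₁def
  have hTa : T a = h₁ + w₁ := hdecomp a
  have hw₁ : ‖w₁‖ < 1/10 := by
    rw [hw₁def]
    exact lt_of_le_of_lt (aux_tail_bound v hvle a N) hN
  have hTa_ge : (1:ℝ) - 1/10 ≤ ‖T a‖ := by
    have := norm_sub_norm_le u (T a)
    rw [hunorm] at this
    linarith
  have hh₁norm : (1:ℝ) - 1/10 - 1/10 ≤ ‖h₁‖ := by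
    have : ‖T a - w₁‖ ≤ ‖T a‖ + ‖w₁‖ := norm_sub_le _ _
    have he : h₁ = T a - w₁ := by rw [hTa]; abel
    have h2 : ‖h₁‖ ≥ ‖T a‖ - ‖w₁‖ := by
      rw [he]
      have := norm_sub_norm_le (T a) w₁
      linarith [norm_sub_norm_le (T a) w₁]
    linarith
  -- second approximant
  set ε₂ : ℝ := (1/10) * (2:ℝ)⁻¹ ^ (N+1) with hε₂def
  have hε₂pos : 0 < ε₂ := by positivity
  obtain ⟨b, hb1, hb2⟩ := hap ε₂ hε₂pos
  have hTb_ge : (1:ℝ) - ε₂ ≤ ‖T b‖ := by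
    have := norm_sub_norm_le u (T b)
    rw [hunorm] at this
    linarith
  -- coefficient bounds for b
  have hbsum : Summable (fun j => ‖b j‖) := aux_lp_summable b
  have hbcsum : Summable (fun j => ‖b j‖ * c j) := by
    apply Summable.of_nonneg_of_le (fun j => mul_nonneg (norm_nonneg _) (hcpos j).le) _ hbsum
    intro j
    calc ‖b j‖ * c j ≤ ‖b j‖ * 1 := mul_le_mul_of_nonneg_left (hclt j).le (norm_nonneg _)
      _ = ‖b j‖ := mul_one _
  have hTb_le : ‖T b‖ ≤ ∑' j, ‖b j‖ * c j := by
    rw [hT]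
    calc ‖∑' j, b j • v j‖ ≤ ∑' j, ‖b j • v j‖ := norm_tsum_le_tsum_norm (hsn b)
      _ = ∑' j, ‖b j‖ * c j := by
          apply tsum_congr
          intro j
          rw [norm_smul, hvnorm j]
  have hbnorm : ∑' j, ‖b j‖ ≤ 1 := by rw [← aux_lp_norm b]; exact hb1
  have hdiff : ∑' j, (‖b j‖ - ‖b j‖ * c j) ≤ ε₂ := by
    rw [Summable.tsum_sub hbsum hbcsum]
    linarith
  have hdiffsum : Summable (fun j => ‖b j‖ - ‖b j‖ * c j) := hbsum.sub hbcsum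
  have hcoef : ∀ j, ‖b j‖ * (2:ℝ)⁻¹ ^ (j+1) ≤ ε₂ := by
    intro j
    have hterm : ‖b j‖ - ‖b j‖ * c j = ‖b j‖ * (2:ℝ)⁻¹ ^ (j+1) := by
      simp only [hc]; ring
    have := Summable.le_tsum hdiffsum j (fun i _ => by
      have : ‖b i‖ - ‖b i‖ * c i = ‖b i‖ * (2:ℝ)⁻¹ ^ (i+1) := by simp only [hc]; ring
      rw [this]
      positivity)
    rw [hterm] at this
    linarith
  have hcoef2 : ∀ j, ‖b j‖ ≤ ε₂ * 2 ^ (j+1) := by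
    intro j
    have h2 : (0:ℝ) < (2:ℝ)⁻¹ ^ (j+1) := by positivity
    have := hcoef j
    rw [inv_pow] at this h2
    calc ‖b j‖ = ‖b j‖ * ((2:ℝ)^(j+1))⁻¹ * (2:ℝ)^(j+1) := by
          field_simp
      _ ≤ ε₂ * 2 ^ (j+1) := by
          apply mul_le_mul_of_nonneg_right this (by positivity)
  set h₂ : Y := ∑ j ∈ Finset.range N, b j • v j with hh₂def
  set w₂ : Y := ∑' i, b (i + N) • v (i + N) with hw₂def
  have hTb : T b = h₂ + w₂ := hdecomp b
  have hh₂norm : ‖h₂‖ ≤ 1/10 := by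
    rw [hh₂def]
    calc ‖∑ j ∈ Finset.range N, b j • v j‖ ≤ ∑ j ∈ Finset.range N, ‖b j • v j‖ :=
          norm_sum_le _ _
      _ ≤ ∑ j ∈ Finset.range N, ε₂ * 2 ^ (j+1) := by
          apply Finset.sum_le_sum
          intro j _
          rw [norm_smul]
          calc ‖b j‖ * ‖v j‖ ≤ ‖b j‖ * 1 := mul_le_mul_of_nonneg_left (hvle j) (norm_nonneg _)
            _ = ‖b j‖ := mul_one _
            _ ≤ ε₂ * 2 ^ (j+1) := hcoef2 j
      _ = ε₂ * ∑ j ∈ Finset.range N, 2 ^ (j+1) := by rw [Finset.mul_sum]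
      _ ≤ ε₂ * 2 ^ (N+1) := by
          apply mul_le_mul_of_nonneg_left _ hε₂pos.le
          have : ∑ j ∈ Finset.range N, (2:ℝ) ^ (j+1) = 2 * ∑ j ∈ Finset.range N, 2 ^ j := by
            rw [Finset.mul_sum]
            apply Finset.sum_congr rfl
            intro j _
            ring
          rw [this, geom_sum_eq (by norm_num : (2:ℝ) ≠ 1) N]
          have h2N : (2:ℝ)^N ≤ 2^N := le_refl _
          have : ((2:ℝ)^N - 1)/(2-1) = 2^N - 1 := by norm_num
          rw [this]
          have : (2:ℝ)^(N+1) = 2 * 2^N := by ring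
          rw [this]
          nlinarith [pow_pos (by norm_num : (0:ℝ) < 2) N]
      _ = 1/10 := by
          rw [hε₂def, inv_pow]
          field_simp
  -- apply the separation estimate
  have hmemh : h₁ - h₂ ∈ Shead := Submodule.sub_mem _ (hterm_head a) (hterm_head b)
  have hmemw : w₁ - w₂ ∈ closure (Stail : Set Y) := by
    have h1 : w₁ ∈ Stail.topologicalClosure := hterm_tail a
    have h2 : w₂ ∈ Stail.topologicalClosure := hterm_tail b
    exact Submodule.sub_mem _ h1 h2
  have hkey := aux_proj z hz2 N (h₁ - h₂) hmemh (w₁ - w₂) hmemw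
  have heq : (h₁ - h₂) + (w₁ - w₂) = T a - T b := by
    rw [hTa, hTb]; abel
  rw [heq] at hkey
  have hTaTb : ‖T a - T b‖ < 1/10 + ε₂ := by
    calc ‖T a - T b‖ = ‖(T a - u) + (u - T b)‖ := by abel_nf
      _ ≤ ‖T a - u‖ + ‖u - T b‖ := norm_add_le _ _
      _ < 1/10 + ε₂ := by
          rw [norm_sub_rev]
          exact add_lt_add ha2 hb2
  have hε₂le : ε₂ ≤ 1/10 := by
    rw [hε₂def]
    have : (2:ℝ)⁻¹ ^ (N+1) ≤ 1 := by
      apply pow_le_one₀ <;> norm_num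
    nlinarith
  have hlower : (7:ℝ)/10 ≤ ‖h₁ - h₂‖ := by
    have := norm_sub_norm_le h₁ h₂
    linarith [norm_sub_norm_le h₁ h₂]
  linarith
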